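/- Fix ε > 0, a_ε = (√(1+4ε) − 1)/2, μ_ε(s) = max{s(1−s)+ε, ε}, and let f_ε be the regularized potential. Then for every s ∈ ℝ with s ≠ 0 and s ≠ 1, the second derivative f_ε'' is differentiable at s and |(f_ε'')'(s)| · μ_ε(s)² ≤ 1 + 2a_ε. -/

import Mathlib

/-- bound on the third derivative of `f_ε` away from `0` and `1`:
`|f_ε'''(s)| · μ_ε(s)² ≤ 1 + 2a_ε`. -/
theorem regularized_potential_third_derivative_bound (ε : ℝ) (hε : 0 < ε)
    (aε : ℝ) (haε : aε = (Real.sqrt (1 + 4 * ε) - 1) / 2)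
    (με : ℝ → ℝ) (hμε : ∀ s : ℝ, με s = max (s * (1 - s) + ε) ε)
    (fε : ℝ → ℝ) (hreg : ContDiff ℝ 2 fε)
    (hf'' : ∀ s : ℝ, deriv (deriv fε) s = (1 + 2 * aε) / με s)
    (hf' : deriv fε (1/2) = 0) (hf : fε (1/2) = - Real.log 2) :
    ∀ s : ℝ, s ≠ 0 → s ≠ 1 →
      DifferentiableAt ℝ (deriv (deriv fε)) s ∧
      |deriv (deriv (deriv fε)) s| * (με s) ^ 2 ≤ 1 + 2 * aε := by
  intro s hs0 hs1
  have hc : 1 + 2 * aε = Real.sqrt (1 + 4 * ε) := by rw [haε]; ring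
  have hcnn : 0 ≤ 1 + 2 * aε := hc ▸ Real.sqrt_nonneg _
  have hf''eq : deriv (deriv fε) = fun t => (1 + 2 * aε) / με t := funext hf''
  rcases lt_or_ge s 0 with h | h
  · -- s < 0 : με is locally constant ε
    have hev : deriv (deriv fε) =ᶠ[nhds s] fun _ => (1 + 2 * aε) / ε := by
      filter_upwards [Iio_mem_nhds h] with t ht
      rw [hf''eq]
      simp only
      rw [hμε t, max_eq_right (by nlinarith [ht.out])]
    refine ⟨hev.differentiableAt_iff.mpr (differentiableAt_const _), ?_⟩
    rw [hev.deriv_eq, deriv_const]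
    simpa using hcnn
  rcases lt_or_ge 1 s with h' | h'
  · -- 1 < s : με is locally constant ε
    have hev : deriv (deriv fε) =ᶠ[nhds s] fun _ => (1 + 2 * aε) / ε := by
      filter_upwards [Ioi_mem_nhds h'] with t ht
      rw [hf''eq]
      simp only
      rw [hμε t, max_eq_right (by nlinarith [ht.out])]
    refine ⟨hev.differentiableAt_iff.mpr (differentiableAt_const _), ?_⟩
    rw [hev.deriv_eq, deriv_const]
    simpa using hcnn
  · -- 0 < s < 1
    have hs0' : 0 < s := lt_of_le_of_ne h (Ne.symm hs0)
    have hs1' : s < 1 := lt_of_le_of_ne h' hs1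
    have hev : deriv (deriv fε) =ᶠ[nhds s]
        fun t => (1 + 2 * aε) / (t * (1 - t) + ε) := by
      filter_upwards [Ioo_mem_nhds hs0' hs1'] with t ht
      rw [hf''eq]
      simp only
      rw [hμε t, max_eq_left (by nlinarith [ht.1, ht.2])]
    have hden : 0 < s * (1 - s) + ε := by nlinarith
    have h1 : HasDerivAt (fun t : ℝ => t * (1 - t) + ε) (1 - 2 * s) s := by
      have := (((hasDerivAt_id s).mul
        ((hasDerivAt_const s (1 : ℝ)).sub (hasDerivAt_id s)))).add_const ε
      convert this using 1
      all_goals first | rfl | (simp [id]; ring)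
    have hd : HasDerivAt (fun t => (1 + 2 * aε) / (t * (1 - t) + ε))
        ((0 * (s * (1 - s) + ε) - (1 + 2 * aε) * (1 - 2 * s)) /
          (s * (1 - s) + ε) ^ 2) s :=
      (hasDerivAt_const s (1 + 2 * aε)).div h1 hden.ne'
    refine ⟨hev.differentiableAt_iff.mpr hd.differentiableAt, ?_⟩
    rw [hev.deriv_eq, hd.deriv, hμε s, max_eq_left (by nlinarith)]
    rw [abs_div, abs_of_pos (pow_pos hden 2), div_mul_cancel₀ _ (pow_pos hden 2).ne']
    rw [zero_mul, zero_sub, abs_neg, abs_mul, abs_of_nonneg hcnn]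
    have h12 : |1 - 2 * s| ≤ 1 := abs_le.mpr ⟨by linarith, by linarith⟩
    nlinarith [abs_nonneg (1 - 2 * s)]
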